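/- arXiv:2206.03314 — 5 statements merged into one kernel-verified Lean document; each statement's English description precedes it below -/
import Mathlib

section
/- Let c : Fin n → Fin q be a level map with assignment matrix Z and cluster sizes n_j, let σ_b² ≥ 0 and σ_e² > 0 be reals, and set V = σ_b² • (Z * Zᵀ) + σ_e² • I_n. Then for every level j with n_j > 0 and every vector r : Fin n → ℝ, the j-th coordinate of the BLUP σ_b² • (Zᵀ *ᵥ (V⁻¹ *ᵥ r)) equals (n_j * σ_b² / (σ_e² + n_j * σ_b²)) * r̄_j, where r̄_j = (∑_{i : c i = j} r i) / n_j is the average of r over the observations in cluster j. -/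
open Matrix

lemma smul_posSemidef {m : ℕ} {M : Matrix (Fin m) (Fin m) ℝ} (hM : M.PosSemidef) {a : ℝ}
    (ha : 0 ≤ a) : (a • M).PosSemidef := by
  refine ⟨?_, fun x => ?_⟩
  · unfold Matrix.IsHermitian
    rw [conjTranspose_smul, hM.1]; simp
  · have h := mul_nonneg ha (hM.2 x)
    simp only [Finsupp.mul_sum] at h
    convert h using 1
    exact Finsupp.sum_congr fun i _ => Finsupp.sum_congr fun k _ => by
      simp only [Matrix.smul_apply, smul_eq_mul, star_trivial]; ring

lemma smul_one_posDef {m : ℕ} {a : ℝ} (ha : 0 < a) :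
    (a • (1 : Matrix (Fin m) (Fin m) ℝ)).PosDef := by
  have := Matrix.posDef_diagonal_iff (d := fun _ : Fin m => a) |>.mpr (fun _ => ha)
  simpa [Matrix.smul_one_eq_diagonal] using this

/-- The BLUP of the random intercepts model reduces to a shrunken cluster mean:
`b̂_j = n_j σ_b² / (σ_e² + n_j σ_b²) ⬝ r̄_j`. -/
theorem blup_eq_shrunken_cluster_mean {n q : ℕ} (c : Fin n → Fin q)
    (Z : Matrix (Fin n) (Fin q) ℝ)
    (hZ : ∀ i j, Z i j = if c i = j then 1 else 0)
    (σb2 σe2 : ℝ) (hσb : 0 ≤ σb2) (hσe : 0 < σe2)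
    (V : Matrix (Fin n) (Fin n) ℝ)
    (hV : V = σb2 • (Z * Zᵀ) + σe2 • (1 : Matrix (Fin n) (Fin n) ℝ))
    (j : Fin q) (nj : ℕ) (hnj : nj = (Finset.univ.filter fun i => c i = j).card)
    (hpos : 0 < nj) (r : Fin n → ℝ) :
    (σb2 • (Zᵀ *ᵥ (V⁻¹ *ᵥ r))) j =
      ((nj : ℝ) * σb2 / (σe2 + (nj : ℝ) * σb2)) *
        ((∑ i ∈ Finset.univ.filter fun i => c i = j, r i) / (nj : ℝ)) := by
  classical
  -- V is positive definite, hence invertible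
  have hVpd : V.PosDef := by
    rw [hV]
    have h1 : (σb2 • (Z * Zᵀ)).PosSemidef := by
      have : (Z * Zᵀ).PosSemidef := by
        simpa using Matrix.posSemidef_self_mul_conjTranspose Z
      exact smul_posSemidef this hσb
    exact Matrix.PosDef.posSemidef_add h1 (smul_one_posDef hσe)
  have hVunit : IsUnit V := hVpd.isUnit
  have hVinv : V * V⁻¹ = 1 := Matrix.mul_nonsing_inv V ((Matrix.isUnit_iff_isUnit_det V).mp hVunit)
  -- cluster size function
  set N : Fin q → ℝ := fun k => ((Finset.univ.filter fun i => c i = k).card : ℝ) with hN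
  -- Zᵀ Z is diagonal
  have hZtZ : Zᵀ * Z = Matrix.diagonal N := by
    ext k l
    simp only [Matrix.mul_apply, Matrix.transpose_apply, hZ, Matrix.diagonal_apply, hN]
    by_cases hkl : k = l
    · subst hkl
      simp only [if_pos rfl]
      rw [Finset.card_filter]
      push_cast
      apply Finset.sum_congr rfl
      intro i _
      by_cases h : c i = k <;> simp [h]
    · rw [if_neg hkl]
      apply Finset.sum_eq_zero
      intro i _
      by_cases h : c i = k
      · have : ¬ c i = l := fun hh => hkl (h ▸ hh ▸ rfl)
        simp [h, this, hkl]
      · simp [h]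
  -- the key commutation: Zᵀ V = W Zᵀ with W diagonal
  set d : Fin q → ℝ := fun k => σe2 + N k * σb2 with hd
  have hdpos : ∀ k, d k ≠ 0 := by
    intro k
    have h0 : (0:ℝ) ≤ N k := by positivity
    have : 0 < d k := add_pos_of_pos_of_nonneg hσe (mul_nonneg h0 hσb)
    exact this.ne'
  have hcomm : Zᵀ * V = Matrix.diagonal d * Zᵀ := by
    rw [hV, Matrix.mul_add, Matrix.mul_smul, ← Matrix.mul_assoc, hZtZ,
      Matrix.mul_smul, Matrix.mul_one]
    have hW : Matrix.diagonal d =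
        σb2 • Matrix.diagonal N + σe2 • (1 : Matrix (Fin q) (Fin q) ℝ) := by
      ext k l
      by_cases hkl : k = l
      · subst hkl
        simp [Matrix.diagonal_apply_eq, Matrix.one_apply_eq, hd]
        ring
      · simp [Matrix.diagonal_apply_ne _ hkl, Matrix.one_apply_ne hkl]
    rw [hW, Matrix.add_mul, Matrix.smul_mul, Matrix.smul_mul, Matrix.one_mul]
  -- hence Zᵀ V⁻¹ = diagonal d⁻¹ * Zᵀ
  set E : Matrix (Fin q) (Fin q) ℝ := Matrix.diagonal (fun k => (d k)⁻¹) with hE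
  have hED : E * Matrix.diagonal d = 1 := by
    rw [hE, Matrix.diagonal_mul_diagonal]
    have : (fun i => (d i)⁻¹ * d i) = fun _ => (1:ℝ) :=
      funext fun k => inv_mul_cancel₀ (hdpos k)
    rw [this, Matrix.diagonal_one]
  have hkey : Zᵀ * V⁻¹ = E * Zᵀ := by
    have h1 : E * (Zᵀ * V) = Zᵀ := by
      rw [hcomm, ← Matrix.mul_assoc, hED, Matrix.one_mul]
    calc Zᵀ * V⁻¹ = E * (Zᵀ * V) * V⁻¹ := by rw [h1]
      _ = E * Zᵀ * (V * V⁻¹) := by rw [Matrix.mul_assoc, Matrix.mul_assoc, Matrix.mul_assoc]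
      _ = E * Zᵀ := by rw [hVinv, Matrix.mul_one]
  -- compute the j-th coordinate
  have hmv : Zᵀ *ᵥ (V⁻¹ *ᵥ r) = (E * Zᵀ) *ᵥ r := by
    rw [Matrix.mulVec_mulVec, hkey]
  rw [Pi.smul_apply, hmv, smul_eq_mul]
  have hcoord : ((E * Zᵀ) *ᵥ r) j = (d j)⁻¹ * ∑ i ∈ Finset.univ.filter fun i => c i = j, r i := by
    rw [← Matrix.mulVec_mulVec]
    rw [Matrix.mulVec_diagonal]
    congr 1
    simp only [Matrix.mulVec, dotProduct, Matrix.transpose_apply, hZ]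
    rw [Finset.sum_filter]
    apply Finset.sum_congr rfl
    intro i _
    by_cases h : c i = j <;> simp [h]
  rw [hcoord]
  have hnj0 : (nj : ℝ) ≠ 0 := Nat.cast_ne_zero.mpr hpos.ne'
  have hdj : d j = σe2 + (nj : ℝ) * σb2 := by simp [hd, hN, hnj]
  rw [hdj]
  have hden : σe2 + (nj : ℝ) * σb2 ≠ 0 := by rw [← hdj]; exact hdpos j
  field_simp
end

section
/- Let c : Fin n → Fin q be a level map with assignment matrix Z and cluster sizes n_j, with q ≤ n, and let σ_b², σ_e² be real numbers. Then det(σ_b² • (Z * Zᵀ) + σ_e² • I_n) = (σ_e²)^(n - q) * ∏_{j : Fin q} (σ_e² + (n_j : ℝ) * σ_b²). -/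
open Matrix

/-- Determinant of the random intercepts marginal covariance:
`det (σ_b² Z Zᵀ + σ_e² I) = (σ_e²)^(n-q) * ∏_j (σ_e² + n_j σ_b²)`. -/
theorem det_randomIntercepts_marginalCov {n q : ℕ} (hqn : q ≤ n) (c : Fin n → Fin q)
    (Z : Matrix (Fin n) (Fin q) ℝ)
    (hZ : ∀ i j, Z i j = if c i = j then 1 else 0)
    (σb2 σe2 : ℝ) :
    (σb2 • (Z * Zᵀ) + σe2 • (1 : Matrix (Fin n) (Fin n) ℝ)).det =
      σe2 ^ (n - q) *
        ∏ j : Fin q, (σe2 + ((Finset.univ.filter fun i => c i = j).card : ℝ) * σb2) := by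
  set d : Fin q → ℝ := fun j => ((Finset.univ.filter fun i => c i = j).card : ℝ) with hd
  have hZtZ : Zᵀ * Z = Matrix.diagonal d := by
    ext j k
    simp only [Matrix.mul_apply, Matrix.transpose_apply, hZ, Matrix.diagonal, Matrix.of_apply]
    rcases eq_or_ne j k with rfl | hjk
    · rw [if_pos rfl]
      simp only [hd, Finset.card_filter]
      push_cast
      apply Finset.sum_congr rfl
      intro i _
      by_cases h : c i = j <;> simp [h]
    · rw [if_neg hjk]
      apply Finset.sum_eq_zero
      intro i _
      rcases eq_or_ne (c i) j with h | h
      · rw [if_pos h, if_neg (h ▸ hjk), one_mul]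
      · rw [if_neg h, zero_mul]
  have key : ∀ t : ℝ, t ≠ 0 →
      (σb2 • (Z * Zᵀ) + t • (1 : Matrix (Fin n) (Fin n) ℝ)).det
        = t ^ (n - q) * ∏ j : Fin q, (t + d j * σb2) := by
    intro t ht
    have h1 : σb2 • (Z * Zᵀ) + t • (1 : Matrix (Fin n) (Fin n) ℝ)
        = t • ((1 : Matrix (Fin n) (Fin n) ℝ) + ((σb2 / t) • Z) * Zᵀ) := by
      rw [smul_add, Matrix.smul_mul, smul_smul, mul_div_cancel₀ _ ht, add_comm]
    rw [h1, Matrix.det_smul, Matrix.det_one_add_mul_comm, Matrix.mul_smul, hZtZ,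
      ← Matrix.diagonal_smul, ← Matrix.diagonal_one, Matrix.diagonal_add,
      Matrix.det_diagonal, Fintype.card_fin]
    simp only [Pi.add_apply, Pi.one_apply, Pi.smul_apply, smul_eq_mul]
    have hq : (∏ j : Fin q, (1 + σb2 / t * d j))
        = (∏ j : Fin q, (t + d j * σb2)) / t ^ q := by
      rw [eq_div_iff (pow_ne_zero _ ht), ← Fin.prod_const q t, ← Finset.prod_mul_distrib]
      apply Finset.prod_congr rfl
      intro j _
      field_simp
    rw [hq]
    have hpow : t ^ n = t ^ (n - q) * t ^ q := by
      rw [← pow_add, Nat.sub_add_cancel hqn]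
    rw [hpow]
    field_simp
    exact Finset.prod_congr rfl (fun j _ => by ring)
  have hcont1 : Continuous fun t : ℝ =>
      (σb2 • (Z * Zᵀ) + t • (1 : Matrix (Fin n) (Fin n) ℝ)).det := by
    apply Continuous.matrix_det
    exact continuous_const.add (continuous_id.smul continuous_const)
  have hcont2 : Continuous fun t : ℝ => t ^ (n - q) * ∏ j : Fin q, (t + d j * σb2) := by
    fun_prop
  have hfg := Continuous.ext_on (dense_compl_singleton (0 : ℝ)) hcont1 hcont2
    (fun t ht => key t ht)
  exact congrFun hfg σe2
end

section
/- Let V : ℝ → Matrix (Fin n) (Fin n) ℝ have derivative V' at θ₀ (HasDerivAt V V' θ₀), suppose V θ₀ is positive definite, and let r : Fin n → ℝ. Then the function θ ↦ (1/2) * (r ⬝ᵥ ((V θ)⁻¹ *ᵥ r)) + (1/2) * Real.log (V θ).det has derivative at θ₀ equal to -(1/2) * (r ⬝ᵥ (((V θ₀)⁻¹ * V' * (V θ₀)⁻¹) *ᵥ r)) + (1/2) * Matrix.trace ((V θ₀)⁻¹ * V'). -/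
open Matrix

attribute [local instance] Matrix.normedAddCommGroup Matrix.normedSpace

private theorem entry_hasDerivAt {n : ℕ} {V : ℝ → Matrix (Fin n) (Fin n) ℝ}
    {V' : Matrix (Fin n) (Fin n) ℝ} {θ₀ : ℝ}
    (hV : HasDerivAt V V' θ₀) (i j : Fin n) :
    HasDerivAt (fun θ => V θ i j) (V' i j) θ₀ := by
  have := ((ContinuousLinearMap.proj (R := ℝ) (φ := fun _ : Fin n => ℝ) j).comp
    (ContinuousLinearMap.proj (R := ℝ) (φ := fun _ : Fin n => (Fin n) → ℝ)
      i)).hasFDerivAt.comp θ₀ hV.hasFDerivAt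
  convert this.hasDerivAt using 1
  show V' i j = ((1 : ℝ) • V') i j
  simp
  all_goals rfl

private theorem exists_ne_of_ne_one {n : ℕ} {σ : Equiv.Perm (Fin n)} (hσ : σ ≠ 1) (i : Fin n) :
    ∃ k, k ≠ i ∧ σ k ≠ k := by
  obtain ⟨a, ha⟩ : ∃ a, σ a ≠ a := by
    by_contra h
    push_neg at h
    exact hσ (Equiv.ext h)
  by_cases hai : a = i
  · subst hai
    refine ⟨σ a, ha, fun h => ha (σ.injective h)⟩
  · exact ⟨a, hai, ha⟩

/-- Derivative of the determinant at a point where the matrix equals the identity. -/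
private theorem det_hasDerivAt_one {n : ℕ} {M : ℝ → Matrix (Fin n) (Fin n) ℝ}
    {M' : Matrix (Fin n) (Fin n) ℝ} {θ₀ : ℝ}
    (h : ∀ i j, HasDerivAt (fun θ => M θ i j) (M' i j) θ₀) (h0 : M θ₀ = 1) :
    HasDerivAt (fun θ => (M θ).det) (Matrix.trace M') θ₀ := by
  have hrw : (fun θ => (M θ).det) =
      fun θ => ∑ σ : Equiv.Perm (Fin n), ((Equiv.Perm.sign σ : ℤ) : ℝ) * ∏ i, M θ (σ i) i := by
    funext θ
    rw [Matrix.det_apply']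
  rw [hrw]
  have hterm : ∀ σ : Equiv.Perm (Fin n),
      HasDerivAt (fun θ => ((Equiv.Perm.sign σ : ℤ) : ℝ) * ∏ i, M θ (σ i) i)
        (((Equiv.Perm.sign σ : ℤ) : ℝ) *
          ∑ i, (∏ j ∈ Finset.univ.erase i, M θ₀ (σ j) j) • M' (σ i) i) θ₀ := fun σ =>
    (HasDerivAt.fun_finsetProd (fun i _ => h (σ i) i)).const_mul _
  have := HasDerivAt.fun_sum (fun σ (_ : σ ∈ Finset.univ) => hterm σ)
  convert this using 1
  any_goals rfl
  rw [Finset.sum_eq_single (1 : Equiv.Perm (Fin n))]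
  · simp [h0, Matrix.trace, Matrix.diag, Finset.prod_eq_one, Matrix.one_apply]
  · intro σ _ hσ
    have : ∀ i : Fin n, (∏ j ∈ Finset.univ.erase i, M θ₀ (σ j) j) = 0 := by
      intro i
      obtain ⟨k, hki, hk⟩ := exists_ne_of_ne_one hσ i
      refine Finset.prod_eq_zero (Finset.mem_erase.mpr ⟨hki, Finset.mem_univ k⟩) ?_
      rw [h0]
      exact Matrix.one_apply_ne hk
    simp [this]
  · simp

/-- Differentiability of the determinant of a matrix with differentiable entries. -/
private theorem det_differentiableAt {n : ℕ} {M : ℝ → Matrix (Fin n) (Fin n) ℝ} {θ₀ : ℝ}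
    (h : ∀ i j, DifferentiableAt ℝ (fun θ => M θ i j) θ₀) :
    DifferentiableAt ℝ (fun θ => (M θ).det) θ₀ := by
  have hrw : (fun θ => (M θ).det) =
      fun θ => ∑ σ : Equiv.Perm (Fin n), ((Equiv.Perm.sign σ : ℤ) : ℝ) * ∏ i, M θ (σ i) i := by
    funext θ
    rw [Matrix.det_apply']
  rw [hrw]
  exact DifferentiableAt.fun_sum fun σ _ =>
    (DifferentiableAt.fun_finsetProd (u := Finset.univ) fun i _ => h (σ i) i).const_mul _

/-- Gradient of the Gaussian negative log-likelihood with respect to a scalar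
variance-component parameter:
`∂/∂θ (½ rᵀ V(θ)⁻¹ r + ½ log det V(θ)) = −½ rᵀ V⁻¹ V' V⁻¹ r + ½ tr(V⁻¹ V')`. -/
theorem hasDerivAt_nll {n : ℕ} (V : ℝ → Matrix (Fin n) (Fin n) ℝ)
    (V' : Matrix (Fin n) (Fin n) ℝ) (θ₀ : ℝ)
    (hV : HasDerivAt V V' θ₀) (hpd : (V θ₀).PosDef) (r : Fin n → ℝ) :
    HasDerivAt
      (fun θ => (1 / 2) * (r ⬝ᵥ ((V θ)⁻¹ *ᵥ r)) + (1 / 2) * Real.log (V θ).det)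
      (-(1 / 2) * (r ⬝ᵥ (((V θ₀)⁻¹ * V' * (V θ₀)⁻¹) *ᵥ r)) +
        (1 / 2) * Matrix.trace ((V θ₀)⁻¹ * V')) θ₀ := by
  have hE := entry_hasDerivAt hV
  set A := V θ₀ with hA
  have hdet0 : A.det ≠ 0 := ne_of_gt hpd.det_pos
  have hunit : IsUnit A.det := isUnit_iff_ne_zero.mpr hdet0
  -- derivative of θ ↦ det (V θ)
  have hM : ∀ i j, HasDerivAt (fun θ => (A⁻¹ * V θ) i j) ((A⁻¹ * V') i j) θ₀ := by
    intro i j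
    simp only [Matrix.mul_apply]
    exact HasDerivAt.fun_sum fun k _ => (hE k j).const_mul _
  have hdetM : HasDerivAt (fun θ => (A⁻¹ * V θ).det) (Matrix.trace (A⁻¹ * V')) θ₀ :=
    det_hasDerivAt_one hM (by rw [← hA, Matrix.nonsing_inv_mul A hunit])
  have hdetV : HasDerivAt (fun θ => (V θ).det) (A.det * Matrix.trace (A⁻¹ * V')) θ₀ := by
    have := hdetM.const_mul A.det
    convert this using 1
    any_goals rfl
    funext θ
    rw [Matrix.det_mul, Matrix.det_nonsing_inv, Ring.inverse_eq_inv]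
    field_simp
  -- derivative of θ ↦ log det (V θ)
  have hlog : HasDerivAt (fun θ => Real.log (V θ).det) (Matrix.trace (A⁻¹ * V')) θ₀ := by
    have := hdetV.log hdet0
    convert this using 1
    rw [← hA]
    field_simp
  -- differentiability of the entries of the inverse
  have hinvdiff : ∀ i j, DifferentiableAt ℝ (fun θ => (V θ)⁻¹ i j) θ₀ := by
    intro i j
    have hrw : (fun θ => (V θ)⁻¹ i j) =
        fun θ => ((V θ).det)⁻¹ * ((V θ).adjugate i j) := by
      funext θ
      rw [Matrix.inv_def, Matrix.smul_apply, Ring.inverse_eq_inv, smul_eq_mul]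
    rw [hrw]
    have hadj : DifferentiableAt ℝ (fun θ => (V θ).adjugate i j) θ₀ := by
      have hrw2 : (fun θ => (V θ).adjugate i j) =
          fun θ => ((V θ).updateRow j (Pi.single i 1)).det := by
        funext θ; rw [Matrix.adjugate_apply]
      rw [hrw2]
      refine det_differentiableAt fun a b => ?_
      by_cases haj : a = j
      · simp only [Matrix.updateRow_apply, haj, if_true]
        exact differentiableAt_const _
      · simp only [Matrix.updateRow_apply, haj, if_false]
        exact (hE a b).differentiableAt
    exact (((det_differentiableAt fun a b => (hE a b).differentiableAt).inv hdet0).mul hadj)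
  -- the derivative matrix of the inverse
  set G : Matrix (Fin n) (Fin n) ℝ :=
    Matrix.of fun i j => deriv (fun θ => (V θ)⁻¹ i j) θ₀ with hGdef
  have hG : ∀ i j, HasDerivAt (fun θ => (V θ)⁻¹ i j) (G i j) θ₀ := fun i j =>
    (hinvdiff i j).hasDerivAt
  -- eventually V θ is invertible
  have hev : ∀ᶠ θ in nhds θ₀, (V θ).det ≠ 0 :=
    (hdetV.continuousAt).eventually_ne hdet0
  -- identify G
  have hprod : ∀ i j, HasDerivAt (fun θ => ∑ k, V θ i k * (V θ)⁻¹ k j)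
      ((V' * A⁻¹ + A * G) i j) θ₀ := by
    intro i j
    have : HasDerivAt (fun θ => ∑ k, V θ i k * (V θ)⁻¹ k j)
        (∑ k, (V' i k * A⁻¹ k j + A i k * G k j)) θ₀ :=
      HasDerivAt.fun_sum fun k _ => (hE i k).mul (hG k j)
    convert this using 1
    simp [Matrix.add_apply, Matrix.mul_apply, Finset.sum_add_distrib]
  have hzero : V' * A⁻¹ + A * G = 0 := by
    ext i j
    have hconst : HasDerivAt (fun _ : ℝ => (1 : Matrix (Fin n) (Fin n) ℝ) i j)
        ((V' * A⁻¹ + A * G) i j) θ₀ := by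
      refine (hprod i j).congr_of_eventuallyEq ?_
      filter_upwards [hev] with θ hθ
      rw [← Matrix.mul_apply, Matrix.mul_nonsing_inv _ (isUnit_iff_ne_zero.mpr hθ)]
    have := (hasDerivAt_const θ₀ ((1 : Matrix (Fin n) (Fin n) ℝ) i j)).unique hconst
    simpa using this.symm
  have hGeq : G = -(A⁻¹ * V' * A⁻¹) := by
    have hAG : A * G = -(V' * A⁻¹) := by
      have := hzero
      rw [add_eq_zero_iff_eq_neg] at this
      rw [add_comm] at hzero
      rw [add_eq_zero_iff_eq_neg] at hzero
      exact hzero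
    calc G = A⁻¹ * (A * G) := by
            rw [← Matrix.mul_assoc, Matrix.nonsing_inv_mul _ hunit, Matrix.one_mul]
      _ = -(A⁻¹ * V' * A⁻¹) := by rw [hAG, Matrix.mul_neg, Matrix.mul_assoc]
  -- derivative of the quadratic form
  have hquad : HasDerivAt (fun θ => r ⬝ᵥ ((V θ)⁻¹ *ᵥ r)) (r ⬝ᵥ (G *ᵥ r)) θ₀ := by
    have : HasDerivAt (fun θ => ∑ i, r i * ∑ j, (V θ)⁻¹ i j * r j)
        (∑ i, r i * ∑ j, G i j * r j) θ₀ :=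
      HasDerivAt.fun_sum fun i _ =>
        (HasDerivAt.fun_sum fun j _ => (hG i j).mul_const (r j)).const_mul (r i)
    have hfun : (fun θ => r ⬝ᵥ ((V θ)⁻¹ *ᵥ r)) =
        fun θ => ∑ i, r i * ∑ j, (V θ)⁻¹ i j * r j := by
      funext θ; simp [dotProduct, Matrix.mulVec]
    rw [hfun]
    convert this using 1
    simp [dotProduct, Matrix.mulVec]
  have final := (hquad.const_mul (1 / 2 : ℝ)).add (hlog.const_mul (1 / 2 : ℝ))
  convert final using 1
  any_goals rfl
  rw [hGeq, Matrix.neg_mulVec, dotProduct_neg]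
  ring
end

section
/- Let L ≥ 1 and p > 0, let A : Fin L → Matrix (Fin n) (Fin n) ℝ be a family of real symmetric positive semidefinite matrices, and let C : Fin L → ℝ be such that for every l and every k with 1 ≤ k ≤ n, the k-th largest eigenvalue of A l is at most C l * (k : ℝ)^(-p). Then for every k with 1 ≤ k ≤ n, the k-th largest eigenvalue of the sum ∑_l A l is at most ((L : ℝ)^p * ∑_l C l) * (k : ℝ)^(-p). In particular a sum of L kernel matrices each with polynomial eigendecay of rate p has polynomial eigendecay of rate p. -/
open Matrix Polynomial Submodule Module
open scoped RealInnerProductSpace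

/-- The `k`-th largest eigenvalue (counted with multiplicity) of a real square
matrix, defined as the `(k-1)`-th entry of the multiset of roots of its
characteristic polynomial sorted in decreasing order (for a real symmetric
matrix these roots are exactly the eigenvalues). -/
noncomputable def kthLargestEigenvalue {n : ℕ} (A : Matrix (Fin n) (Fin n) ℝ)
    (k : ℕ) : ℝ :=
  (A.charpoly.roots.sort (· ≥ ·)).getD (k - 1) 0

section Helpers
variable {n : ℕ}



lemma charpoly_eq_prod {M : Matrix (Fin n) (Fin n) ℝ} (hM : M.IsHermitian) :
    M.charpoly = ∏ i, (X - C (hM.eigenvalues i)) := by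
  have hs := hM.spectral_theorem
  set U : Matrix (Fin n) (Fin n) ℝ := (hM.eigenvectorUnitary : Matrix (Fin n) (Fin n) ℝ) with hU
  have hUV : U * star U = 1 := Unitary.mul_star_self_of_mem hM.eigenvectorUnitary.2
  have hVU : star U * U = 1 := Unitary.star_mul_self_of_mem hM.eigenvectorUnitary.2
  have hD : (RCLike.ofReal ∘ hM.eigenvalues : Fin n → ℝ) = hM.eigenvalues := by
    ext i; simp
  have key : M.charpoly = (Matrix.diagonal hM.eigenvalues).charpoly := by
    rw [Matrix.charpoly, Matrix.charpoly]
    have hcomm : ∀ (B : Matrix (Fin n) (Fin n) ℝ),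
        Matrix.scalar (Fin n) (X : ℝ[X]) * C.mapMatrix B = C.mapMatrix B * Matrix.scalar (Fin n) (X : ℝ[X]) :=
      fun B => (Matrix.scalar_commute (X : ℝ[X]) (fun r' => Commute.all _ _) _)
    have h1 : C.mapMatrix U * C.mapMatrix (star U) = 1 := by
      rw [← _root_.map_mul, hUV, _root_.map_one]
    have h2 : C.mapMatrix (star U) * C.mapMatrix U = 1 := by
      rw [← _root_.map_mul, hVU, _root_.map_one]
    have : charmatrix M = (C.mapMatrix U) * charmatrix (Matrix.diagonal hM.eigenvalues) * (C.mapMatrix (star U)) := by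
      rw [charmatrix, charmatrix, Matrix.mul_sub, Matrix.sub_mul]
      congr 1
      · rw [← hcomm U, Matrix.mul_assoc, h1, Matrix.mul_one]
      · rw [← _root_.map_mul, ← _root_.map_mul]
        exact congrArg _ (by simpa using hs)
    rw [this, Matrix.det_mul, Matrix.det_mul, mul_comm, ← mul_assoc, ← Matrix.det_mul, h2]
    simp
  rw [key, Matrix.charpoly]
  rw [show charmatrix (Matrix.diagonal hM.eigenvalues)
      = Matrix.diagonal (fun i => (X : ℝ[X]) - C (hM.eigenvalues i)) from ?_]
  · rw [Matrix.det_diagonal]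
  · ext i j
    by_cases h : i = j
    · subst h; simp [charmatrix_apply_eq]
    · simp [charmatrix_apply_ne _ _ _ h, Matrix.diagonal_apply_ne _ h]

lemma roots_charpoly {M : Matrix (Fin n) (Fin n) ℝ} (hM : M.IsHermitian) :
    M.charpoly.roots = (Finset.univ.val.map hM.eigenvalues) := by
  rw [charpoly_eq_prod hM]
  rw [show (∏ i, (X - C (hM.eigenvalues i))) = ((Finset.univ.val.map hM.eigenvalues).map fun a => X - C a).prod by
    rw [Multiset.map_map]; rfl]
  exact roots_multiset_prod_X_sub_C _



-- counting lemmas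
lemma countP_gt_le {s : List ℝ} (hs : s.Pairwise (· ≥ ·)) {j : ℕ} (hj : j < s.length) {x : ℝ}
    (hx : s[j] = x) :
    s.countP (fun a => decide (x < a)) ≤ j := by
  have hpw := List.pairwise_iff_getElem.mp hs
  have hdrop : (s.drop j).countP (fun a => decide (x < a)) = 0 := by
    rw [List.countP_eq_zero]
    intro a ha
    obtain ⟨i, hi, rfl⟩ := List.mem_iff_getElem.mp ha
    rw [List.getElem_drop]
    simp only [decide_eq_true_eq, not_lt, ← hx]
    rcases Nat.eq_zero_or_pos i with h' | h'
    · subst h'; simp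
    · exact hpw j (j+i) hj (by rw [List.length_drop] at hi; omega) (by omega)
  calc s.countP (fun a => decide (x < a))
      = (s.take j).countP (fun a => decide (x < a))
        + (s.drop j).countP (fun a => decide (x < a)) := by
        rw [← List.countP_append, List.take_append_drop]
    _ ≤ j + 0 := by
        rw [hdrop]
        exact Nat.add_le_add (List.countP_le_length.trans (by simp)) le_rfl
    _ = j := by ring

lemma le_countP_ge {s : List ℝ} (hs : s.Pairwise (· ≥ ·)) {j : ℕ} (hj : j < s.length) {x : ℝ}
    (hx : s[j] = x) :
    j + 1 ≤ s.countP (fun a => decide (x ≤ a)) := by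
  have hpw := List.pairwise_iff_getElem.mp hs
  have h1 : (s.take (j+1)).countP (fun a => decide (x ≤ a)) = j + 1 := by
    rw [List.countP_eq_length.mpr, List.length_take, Nat.min_eq_left hj]
    intro a ha
    obtain ⟨i, hi, rfl⟩ := List.mem_iff_getElem.mp ha
    rw [List.getElem_take]
    simp only [decide_eq_true_eq, ← hx]
    have hij : i ≤ j := by
      simp [List.length_take] at hi; omega
    rcases Nat.eq_or_lt_of_le hij with h' | h'
    · subst h'; exact le_rfl
    · exact hpw i j (by rw [List.length_take] at hi; omega) hj h'
  calc j + 1 = (s.take (j+1)).countP (fun a => decide (x ≤ a)) := h1.symm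
    _ ≤ (s.take (j+1)).countP (fun a => decide (x ≤ a))
        + (s.drop (j+1)).countP (fun a => decide (x ≤ a)) := Nat.le_add_right _ _
    _ = s.countP (fun a => decide (x ≤ a)) := by
        rw [← List.countP_append, List.take_append_drop]

-- eigenbasis action
lemma toEuclideanLin_eigenvectorBasis {M : Matrix (Fin n) (Fin n) ℝ} (hM : M.IsHermitian) (i : Fin n) :
    Matrix.toEuclideanLin M (hM.eigenvectorBasis i) = hM.eigenvalues i • hM.eigenvectorBasis i := by
  apply (WithLp.equiv 2 (Fin n → ℝ)).injective
  change WithLp.ofLp (Matrix.toEuclideanLin M (hM.eigenvectorBasis i)) = WithLp.ofLp (hM.eigenvalues i • hM.eigenvectorBasis i)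
  rw [Matrix.ofLp_toEuclideanLin_apply]
  simpa using hM.mulVec_eigenvectorBasis i

lemma qf_eq {M : Matrix (Fin n) (Fin n) ℝ} (hM : M.IsHermitian) (x : EuclideanSpace ℝ (Fin n)) :
    ⟪x, Matrix.toEuclideanLin M x⟫ = ∑ i, hM.eigenvalues i * ⟪hM.eigenvectorBasis i, x⟫ ^ 2 := by
  have hsymm : (Matrix.toEuclideanLin M).IsSymmetric := (Matrix.isHermitian_iff_isSymmetric).mp hM
  rw [← hM.eigenvectorBasis.sum_inner_mul_inner x (Matrix.toEuclideanLin M x)]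
  refine Finset.sum_congr rfl fun i _ => ?_
  rw [← hsymm (hM.eigenvectorBasis i) x, toEuclideanLin_eigenvectorBasis hM i,
    inner_smul_left, real_inner_comm x]
  simp [pow_two]; ring

lemma norm_sq_eq {x : EuclideanSpace ℝ (Fin n)} (b : OrthonormalBasis (Fin n) ℝ (EuclideanSpace ℝ (Fin n))) :
    ⟪x, x⟫ = ∑ i, ⟪b i, x⟫ ^ 2 := by
  rw [← b.sum_inner_mul_inner x x]
  refine Finset.sum_congr rfl fun i _ => ?_
  rw [real_inner_comm x, pow_two]

lemma length_sortList {M : Matrix (Fin n) (Fin n) ℝ} (hM : M.IsHermitian) :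
    (M.charpoly.roots.sort (· ≥ ·)).length = n := by
  rw [Multiset.length_sort, roots_charpoly hM]
  simp

lemma card_filter_eq_countP {M : Matrix (Fin n) (Fin n) ℝ} (hM : M.IsHermitian)
    (P : ℝ → Prop) [DecidablePred P] :
    (Finset.univ.filter (fun i => P (hM.eigenvalues i))).card
      = (M.charpoly.roots.sort (· ≥ ·)).countP (fun a => decide (P a)) := by
  rw [← Multiset.coe_countP, Multiset.sort_eq, roots_charpoly hM, Multiset.countP_map]
  rfl

-- counting corollaries for eigenvalues
lemma card_gt_le {M : Matrix (Fin n) (Fin n) ℝ} (hM : M.IsHermitian) {k : ℕ}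
    (hk1 : 1 ≤ k) (hkn : k ≤ n) :
    (Finset.univ.filter (fun i => kthLargestEigenvalue M k < hM.eigenvalues i)).card ≤ k - 1 := by
  have hlen : k - 1 < (M.charpoly.roots.sort (· ≥ ·)).length := by
    rw [length_sortList hM]; omega
  have hx : (M.charpoly.roots.sort (· ≥ ·))[k-1] = kthLargestEigenvalue M k := by
    rw [kthLargestEigenvalue, List.getD_eq_getElem _ _ hlen]
  rw [card_filter_eq_countP hM]
  exact countP_gt_le (Multiset.pairwise_sort _ _) hlen hx

lemma le_card_ge {M : Matrix (Fin n) (Fin n) ℝ} (hM : M.IsHermitian) {k : ℕ}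
    (hk1 : 1 ≤ k) (hkn : k ≤ n) :
    k ≤ (Finset.univ.filter (fun i => kthLargestEigenvalue M k ≤ hM.eigenvalues i)).card := by
  have hlen : k - 1 < (M.charpoly.roots.sort (· ≥ ·)).length := by
    rw [length_sortList hM]; omega
  have hx : (M.charpoly.roots.sort (· ≥ ·))[k-1] = kthLargestEigenvalue M k := by
    rw [kthLargestEigenvalue, List.getD_eq_getElem _ _ hlen]
  rw [card_filter_eq_countP hM]
  have := le_countP_ge (Multiset.pairwise_sort _ _) hlen hx
  omega

end Helpers
section Helpers2
variable {n : ℕ}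

lemma kth_nonneg {M : Matrix (Fin n) (Fin n) ℝ} (hM : M.PosSemidef) {k : ℕ}
    (hk1 : 1 ≤ k) (hkn : k ≤ n) : 0 ≤ kthLargestEigenvalue M k := by
  have hlen : k - 1 < (M.charpoly.roots.sort (· ≥ ·)).length := by
    rw [length_sortList hM.1]; omega
  rw [kthLargestEigenvalue, List.getD_eq_getElem _ _ hlen]
  have hmem : (M.charpoly.roots.sort (· ≥ ·))[k-1] ∈ (M.charpoly.roots.sort (· ≥ ·)) :=
    List.getElem_mem _
  rw [← Multiset.mem_coe, Multiset.sort_eq] at hmem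
  obtain ⟨i, -, hi⟩ := Multiset.mem_map.mp (by rw [← roots_charpoly hM.1]; exact hmem)
  rw [← hi]
  exact hM.eigenvalues_nonneg i

lemma inner_eq_zero_of_span {v : Fin n → EuclideanSpace ℝ (Fin n)} (hv : Orthonormal ℝ v)
    {P : Fin n → Prop} {x : EuclideanSpace ℝ (Fin n)}
    (hx : x ∈ span ℝ (v '' {i | P i})) {j : Fin n} (hj : ¬ P j) :
    ⟪v j, x⟫ = 0 := by
  induction hx using Submodule.span_induction with
  | mem y hy =>
    obtain ⟨i, hi, rfl⟩ := hy
    exact hv.2 (fun h : j = i => hj (h ▸ hi))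
  | zero => exact inner_zero_right _
  | add a b _ _ ha hb => rw [inner_add_right, ha, hb, add_zero]
  | smul c a _ ha => rw [inner_smul_right, ha, mul_zero]

lemma qf_le {M : Matrix (Fin n) (Fin n) ℝ} (hM : M.IsHermitian) (μ : ℝ)
    {x : EuclideanSpace ℝ (Fin n)}
    (h0 : ∀ i, μ < hM.eigenvalues i → ⟪hM.eigenvectorBasis i, x⟫ = 0) :
    ⟪x, Matrix.toEuclideanLin M x⟫ ≤ μ * ⟪x, x⟫ := by
  rw [qf_eq hM, norm_sq_eq hM.eigenvectorBasis, Finset.mul_sum]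
  refine Finset.sum_le_sum fun i _ => ?_
  rcases le_or_gt (hM.eigenvalues i) μ with h | h
  · exact mul_le_mul_of_nonneg_right h (sq_nonneg _)
  · rw [h0 i h]; simp

lemma qf_ge {M : Matrix (Fin n) (Fin n) ℝ} (hM : M.IsHermitian) (lam : ℝ)
    {x : EuclideanSpace ℝ (Fin n)}
    (h0 : ∀ i, hM.eigenvalues i < lam → ⟪hM.eigenvectorBasis i, x⟫ = 0) :
    lam * ⟪x, x⟫ ≤ ⟪x, Matrix.toEuclideanLin M x⟫ := by
  rw [qf_eq hM, norm_sq_eq hM.eigenvectorBasis, Finset.mul_sum]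
  refine Finset.sum_le_sum fun i _ => ?_
  rcases le_or_gt lam (hM.eigenvalues i) with h | h
  · exact mul_le_mul_of_nonneg_right h (sq_nonneg _)
  · rw [h0 i h]; simp

lemma finrank_span_filter {v : Fin n → EuclideanSpace ℝ (Fin n)} (hv : Orthonormal ℝ v)
    (P : Fin n → Prop) [DecidablePred P] :
    finrank ℝ (span ℝ (v '' {i | P i})) = (Finset.univ.filter P).card := by
  rw [Set.image_eq_range,
    show (fun x : {i | P i} => v ↑x) = v ∘ Subtype.val from rfl,
    finrank_span_eq_card ((hv.linearIndependent).comp Subtype.val Subtype.val_injective),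
    Fintype.card_subtype]
  congr 1

lemma isHermitian_sum {L : ℕ} (A : Fin L → Matrix (Fin n) (Fin n) ℝ)
    (hA : ∀ l, (A l).IsHermitian) : (∑ l, A l).IsHermitian := by
  unfold Matrix.IsHermitian
  rw [Matrix.conjTranspose_sum]
  exact Finset.sum_congr rfl fun l _ => hA l

end Helpers2

/-- A sum of `L` positive semidefinite kernel matrices, each with polynomial
eigendecay of rate `p` (constants `C l`), has polynomial eigendecay of rate `p`
with constant `L^p * ∑ C l`. -/
theorem polynomial_eigendecay_sum {n L : ℕ} (hL : 1 ≤ L) (p : ℝ) (hp : 0 < p)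
    (A : Fin L → Matrix (Fin n) (Fin n) ℝ)
    (hA : ∀ l, (A l).PosSemidef)
    (C : Fin L → ℝ)
    (hdecay : ∀ l, ∀ k : ℕ, 1 ≤ k → k ≤ n →
      kthLargestEigenvalue (A l) k ≤ C l * (k : ℝ) ^ (-p)) :
    ∀ k : ℕ, 1 ≤ k → k ≤ n →
      kthLargestEigenvalue (∑ l, A l) k ≤
        ((L : ℝ) ^ p * ∑ l, C l) * (k : ℝ) ^ (-p) := by
  classical
  intro k hk1 hkn
  have hn : 1 ≤ n := hk1.trans hkn
  -- the split index m = ⌈k/L⌉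
  set m : ℕ := (k - 1) / L + 1 with hmdef
  have hm1 : 1 ≤ m := Nat.le_add_left 1 _
  have hmk : m ≤ k := by
    have := Nat.div_le_self (k - 1) L
    omega
  have hmn : m ≤ n := hmk.trans hkn
  have hLm1 : L * (m - 1) ≤ k - 1 := by
    simpa [hmdef] using Nat.mul_div_le (k - 1) L |>.trans le_rfl
  have hkLm : k ≤ L * m := by
    have h1 : L * ((k - 1) / L) + (k - 1) % L = k - 1 := Nat.div_add_mod (k - 1) L
    have h2 : (k - 1) % L < L := Nat.mod_lt _ (by omega)
    have h3 : L * m = L * ((k - 1) / L) + L := by rw [hmdef]; ring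
    omega
  have hHl : ∀ l, (A l).IsHermitian := fun l => (hA l).1
  have hHM : (∑ l, A l).IsHermitian := isHermitian_sum A hHl
  set lam : ℝ := kthLargestEigenvalue (∑ l, A l) k with hlamdef
  set μ : Fin L → ℝ := fun l => kthLargestEigenvalue (A l) m with hmu
  -- nonnegativity of the constants
  have hC0 : ∀ l, 0 ≤ C l := by
    intro l
    have h1 := kth_nonneg (hA l) le_rfl hn
    have h2 := hdecay l 1 le_rfl hn
    rw [Nat.cast_one, Real.one_rpow, mul_one] at h2
    linarith
  -- the "bad" directions
  set F : Finset (EuclideanSpace ℝ (Fin n)) :=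
    Finset.univ.biUnion (fun l =>
      (Finset.univ.filter (fun i => μ l < (hHl l).eigenvalues i)).image ((hHl l).eigenvectorBasis))
    with hF
  have hFcard : F.card ≤ k - 1 := by
    calc F.card ≤ ∑ l, ((Finset.univ.filter
          (fun i => μ l < (hHl l).eigenvalues i)).image ((hHl l).eigenvectorBasis)).card :=
          Finset.card_biUnion_le
      _ ≤ ∑ l : Fin L, (m - 1) := Finset.sum_le_sum fun l _ =>
          Finset.card_image_le.trans (card_gt_le (hHl l) hm1 hmn)
      _ = L * (m - 1) := by simp [Finset.sum_const, mul_comm]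
      _ ≤ k - 1 := hLm1
  set K : Submodule ℝ (EuclideanSpace ℝ (Fin n)) := span ℝ (F : Set (EuclideanSpace ℝ (Fin n)))
    with hK
  have hKrank : finrank ℝ K ≤ k - 1 := (finrank_span_finset_le_card F).trans hFcard
  set W : Submodule ℝ (EuclideanSpace ℝ (Fin n)) :=
    span ℝ (hHM.eigenvectorBasis '' {i | lam ≤ hHM.eigenvalues i}) with hW
  have hWrank : k ≤ finrank ℝ W := by
    rw [hW, finrank_span_filter hHM.eigenvectorBasis.orthonormal]
    exact le_card_ge hHM hk1 hkn
  have hUrank : n - (k - 1) ≤ finrank ℝ Kᗮ := by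
    have h := Submodule.finrank_add_finrank_orthogonal K
    rw [finrank_euclideanSpace_fin] at h
    omega
  -- a nonzero vector in the intersection
  have hinf : 0 < finrank ℝ (Kᗮ ⊓ W : Submodule ℝ (EuclideanSpace ℝ (Fin n))) := by
    have h1 := Submodule.finrank_sup_add_finrank_inf_eq Kᗮ W
    have h2 : finrank ℝ (Kᗮ ⊔ W : Submodule ℝ (EuclideanSpace ℝ (Fin n))) ≤ n := by
      simpa [finrank_euclideanSpace_fin] using
        (Submodule.finrank_le (Kᗮ ⊔ W : Submodule ℝ (EuclideanSpace ℝ (Fin n))))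
    omega
  obtain ⟨x, hxmem, hx0⟩ : ∃ x, x ∈ (Kᗮ ⊓ W : Submodule ℝ (EuclideanSpace ℝ (Fin n))) ∧ x ≠ 0 := by
    apply Submodule.exists_mem_ne_zero_of_ne_bot
    intro hbot
    rw [hbot, finrank_bot] at hinf
    exact lt_irrefl 0 hinf
  obtain ⟨hxU, hxW⟩ := Submodule.mem_inf.mp hxmem
  have hxx : (0:ℝ) < ⟪x, x⟫ := by
    rcases lt_or_eq_of_le (real_inner_self_nonneg (x := x)) with h | h
    · exact h
    · exact absurd (inner_self_eq_zero.mp h.symm) hx0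
  -- the key spectral estimate: lam ≤ ∑ μ l
  have hkey : lam * ⟪x, x⟫ ≤ (∑ l, μ l) * ⟪x, x⟫ := by
    calc lam * ⟪x, x⟫ ≤ ⟪x, Matrix.toEuclideanLin (∑ l, A l) x⟫ := by
          refine qf_ge hHM lam (fun i hi => ?_)
          exact inner_eq_zero_of_span hHM.eigenvectorBasis.orthonormal hxW (not_le.mpr hi)
      _ = ∑ l, ⟪x, Matrix.toEuclideanLin (A l) x⟫ := by
          rw [map_sum, LinearMap.coe_sum, Finset.sum_apply, inner_sum]
      _ ≤ ∑ l, μ l * ⟪x, x⟫ := by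
          refine Finset.sum_le_sum fun l _ => ?_
          refine qf_le (hHl l) (μ l) (fun i hi => ?_)
          refine (Submodule.mem_orthogonal K x).mp hxU _ (Submodule.subset_span ?_)
          rw [Finset.coe_biUnion]
          refine Set.mem_biUnion (Finset.mem_coe.mpr (Finset.mem_univ l)) ?_
          exact Finset.mem_coe.mpr (Finset.mem_image_of_mem _ (Finset.mem_filter.mpr ⟨Finset.mem_univ i, hi⟩))
      _ = (∑ l, μ l) * ⟪x, x⟫ := (Finset.sum_mul _ _ _).symm
  have hlammu : lam ≤ ∑ l, μ l := le_of_mul_le_mul_right hkey hxx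
  -- real arithmetic
  have hmp : (m:ℝ) ^ (-p) ≤ (L:ℝ) ^ p * (k:ℝ) ^ (-p) := by
    have hk0 : (0:ℝ) < (k:ℝ) := by exact_mod_cast hk1
    have hm0 : (0:ℝ) < (m:ℝ) := by exact_mod_cast hm1
    have hL0 : (0:ℝ) < (L:ℝ) := by exact_mod_cast hL
    have h1 : (k:ℝ) ^ p ≤ ((L:ℝ) * (m:ℝ)) ^ p := by
      refine Real.rpow_le_rpow (le_of_lt hk0) ?_ (le_of_lt hp)
      exact_mod_cast hkLm
    rw [Real.mul_rpow (le_of_lt hL0) (le_of_lt hm0)] at h1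
    rw [Real.rpow_neg (le_of_lt hm0), Real.rpow_neg (le_of_lt hk0)]
    have hkp : (0:ℝ) < (k:ℝ) ^ p := Real.rpow_pos_of_pos hk0 p
    have hmp0 : (0:ℝ) < (m:ℝ) ^ p := Real.rpow_pos_of_pos hm0 p
    have hLp : (0:ℝ) < (L:ℝ) ^ p := Real.rpow_pos_of_pos hL0 p
    rw [show ((m:ℝ)^p)⁻¹ = 1 / (m:ℝ)^p by ring, show (L:ℝ)^p * ((k:ℝ)^p)⁻¹ = (L:ℝ)^p / (k:ℝ)^p by ring]
    rw [div_le_div_iff₀ hmp0 hkp]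
    calc 1 * (k:ℝ)^p = (k:ℝ)^p := one_mul _
      _ ≤ (L:ℝ)^p * (m:ℝ)^p := h1
  calc lam ≤ ∑ l, μ l := hlammu
    _ ≤ ∑ l, C l * (m:ℝ) ^ (-p) := Finset.sum_le_sum fun l _ => hdecay l m hm1 hmn
    _ ≤ ∑ l, C l * ((L:ℝ) ^ p * (k:ℝ) ^ (-p)) := Finset.sum_le_sum fun l _ =>
        mul_le_mul_of_nonneg_left hmp (hC0 l)
    _ = ((L : ℝ) ^ p * ∑ l, C l) * (k : ℝ) ^ (-p) := by
        simp only [Finset.mul_sum, Finset.sum_mul]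
        exact Finset.sum_congr rfl fun l _ => by ring
end

section
/- Let c : Fin n → Fin q be a level map with assignment matrix Z and cluster sizes n_j, with q ≤ n, and let a : ℝ. Then the characteristic polynomial of a • (Z * Zᵀ) equals X^(n - q) * ∏_{j : Fin q} (X - a * (n_j : ℝ)). In particular, the eigenvalues of σ_l² Z Zᵀ are σ_l² n_j for each level j (together with n − q additional zeros), so its spectrum lies in [0, σ_l² · max_j n_j] when σ_l² ≥ 0. -/
open Matrix Polynomial

set_option maxHeartbeats 1000000
set_option synthInstance.maxHeartbeats 200000

private lemma charpoly_map_ratfunc {m : ℕ} (M : Matrix (Fin m) (Fin m) ℝ) :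
    algebraMap (Polynomial ℝ) (RatFunc ℝ) M.charpoly =
      Matrix.det ((algebraMap (Polynomial ℝ) (RatFunc ℝ) Polynomial.X) •
          (1 : Matrix (Fin m) (Fin m) (RatFunc ℝ))
        - M.map ((algebraMap (Polynomial ℝ) (RatFunc ℝ)).comp Polynomial.C)) := by
  rw [Matrix.charpoly, RingHom.map_det]
  congr 1
  ext i j
  by_cases h : i = j
  · subst h
    simp [charmatrix_apply_eq, Matrix.map_apply, Matrix.smul_apply]
  · simp [charmatrix_apply_ne _ _ _ h, Matrix.map_apply, Matrix.one_apply_ne h,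
      Matrix.smul_apply]

private lemma charpoly_mul_comm_rect {n q : ℕ}
    (A : Matrix (Fin n) (Fin q) ℝ) (B : Matrix (Fin q) (Fin n) ℝ) :
    Polynomial.X ^ q * (A * B).charpoly = Polynomial.X ^ n * (B * A).charpoly := by
  apply RatFunc.algebraMap_injective ℝ
  set φ := algebraMap (Polynomial ℝ) (RatFunc ℝ) with hφ
  set ψ := φ.comp (Polynomial.C : ℝ →+* Polynomial ℝ) with hψ
  set x : RatFunc ℝ := φ Polynomial.X with hxdef
  have hx : x ≠ 0 := by
    intro h
    exact Polynomial.X_ne_zero ((RatFunc.algebraMap_injective ℝ) (by rw [map_zero]; exact h))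
  have hAB : (A * B).map ψ = A.map ψ * B.map ψ := Matrix.map_mul
  have hBA : (B * A).map ψ = B.map ψ * A.map ψ := Matrix.map_mul
  have key : ∀ (m : ℕ) (M : Matrix (Fin m) (Fin m) (RatFunc ℝ)),
      Matrix.det (x • (1 : Matrix (Fin m) (Fin m) (RatFunc ℝ)) - M) =
        x ^ m * Matrix.det ((1 : Matrix (Fin m) (Fin m) (RatFunc ℝ)) - x⁻¹ • M) := by
    intro m M
    have h1 : x • (1 : Matrix (Fin m) (Fin m) (RatFunc ℝ)) - M
        = x • ((1 : Matrix (Fin m) (Fin m) (RatFunc ℝ)) - x⁻¹ • M) := by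
      rw [smul_sub, smul_smul, mul_inv_cancel₀ hx, one_smul]
    rw [h1, Matrix.det_smul, Fintype.card_fin]
  rw [_root_.map_mul φ, _root_.map_mul φ, map_pow, map_pow, charpoly_map_ratfunc, charpoly_map_ratfunc,
    ← hφ, ← hψ, ← hxdef, hAB, hBA, key, key]
  have h1 : x⁻¹ • (A.map ψ * B.map ψ) = (x⁻¹ • A.map ψ) * B.map ψ :=
    (Matrix.smul_mul _ _ _).symm
  have h2 : x⁻¹ • (B.map ψ * A.map ψ) = B.map ψ * (x⁻¹ • A.map ψ) :=
    (Matrix.mul_smul _ _ _).symm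
  rw [h1, h2, Matrix.det_one_sub_mul_comm]
  ring

private lemma charpoly_diagonal_real {m : ℕ} (d : Fin m → ℝ) :
    (Matrix.diagonal d).charpoly = ∏ j : Fin m, (Polynomial.X - Polynomial.C (d j)) := by
  rw [Matrix.charpoly]
  have h : charmatrix (Matrix.diagonal d)
      = Matrix.diagonal (fun j => Polynomial.X - Polynomial.C (d j)) := by
    ext i j
    by_cases h : i = j
    · subst h; simp
    · simp [charmatrix_apply_ne _ _ _ h, Matrix.diagonal_apply_ne _ h,
        Matrix.diagonal_apply_ne d h]
  rw [h, Matrix.det_diagonal]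

/-- The characteristic polynomial of `a • Z Zᵀ`, where `Z` is the assignment
matrix of a level map `c` with cluster sizes `n_j` and `q ≤ n`, equals
`X^(n-q) * ∏_j (X - a n_j)`; hence the eigenvalues of `σ_l² Z Zᵀ` are the
`σ_l² n_j` together with `n - q` zeros. -/
theorem charpoly_smul_assignment_mul_transpose {n q : ℕ} (hqn : q ≤ n)
    (c : Fin n → Fin q) (Z : Matrix (Fin n) (Fin q) ℝ)
    (hZ : ∀ i j, Z i j = if c i = j then 1 else 0) (a : ℝ) :
    (a • (Z * Zᵀ)).charpoly =
      Polynomial.X ^ (n - q) *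
        ∏ j : Fin q, (Polynomial.X -
          Polynomial.C (a * ((Finset.univ.filter fun i => c i = j).card : ℝ))) := by
  have hsmul : a • (Z * Zᵀ) = (a • Z) * Zᵀ := (Matrix.smul_mul _ _ _).symm
  have hdiag : Zᵀ * (a • Z) =
      Matrix.diagonal (fun j => a * ((Finset.univ.filter fun i => c i = j).card : ℝ)) := by
    ext j k
    by_cases h : j = k
    · subst h
      simp only [Matrix.mul_apply, Matrix.transpose_apply, Matrix.smul_apply,
        Matrix.diagonal_apply_eq, smul_eq_mul]
      have hterm : ∀ i : Fin n, Z i j * (a * Z i j)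
          = a * (if c i = j then (1 : ℝ) else 0) := by
        intro i
        rw [hZ]
        by_cases hc : c i = j <;> simp [hc]
      rw [Finset.sum_congr rfl fun i _ => hterm i, ← Finset.mul_sum, Finset.sum_boole]
    · simp only [Matrix.mul_apply, Matrix.transpose_apply, Matrix.smul_apply,
        Matrix.diagonal_apply_ne _ h, smul_eq_mul]
      apply Finset.sum_eq_zero
      intro i _
      rw [hZ, hZ]
      by_cases hj : c i = j
      · rw [if_pos hj, if_neg (fun hk => h (hj.symm.trans hk))]
        ring
      · rw [if_neg hj, zero_mul]
  have hrect := charpoly_mul_comm_rect (a • Z) Zᵀ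
  rw [← hsmul, hdiag, charpoly_diagonal_real] at hrect
  have hXq : (Polynomial.X : Polynomial ℝ) ^ q ≠ 0 := pow_ne_zero _ Polynomial.X_ne_zero
  apply mul_left_cancel₀ hXq
  rw [hrect, ← mul_assoc, ← pow_add]
  congr 2
  omega
end
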